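/- Fix integers K ≥ m ≥ 1, ε > 0, c : T_{K,m} → [0,1/K], and let F = (f_1,…,f_m) : T_{K,m} → [K]^m be a collision-robust m-coloring of T_{K,m}. Let x^1, …, x^m ∈ [0,1]^K satisfy ‖x^X − x^Y‖_{ℓ∞} ≤ ε for all X, Y ∈ [m]. Then the m values f_X(P_{c,ε}(x^X)), for X = 1, …, m, are pairwise distinct. -/

import Mathlib

open Classical

noncomputable section

namespace MPB

variable (K m : ℕ)

/-- Max of `x` over a finite set of coordinates. -/
def fmax (x : Fin K → ℝ) (S : Finset (Fin K)) : ℝ := sSup (x '' ↑S)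

/-- Min of `x` over a finite set of coordinates. -/
def fmin (x : Fin K → ℝ) (S : Finset (Fin K)) : ℝ := sInf (x '' ↑S)

/-- range_B(x) = max_{k∈B} x(k) - min_{k∈B} x(k). -/
def rangeX (x : Fin K → ℝ) (B : Finset (Fin K)) : ℝ := fmax K x B - fmin K x B

/-- gap of the child obtained by splitting `B` into `T > B \ T`:
gap = min_{k∈T} x(k) - max_{ℓ∈B\T} x(ℓ). -/
def gapX (x : Fin K → ℝ) (T B : Finset (Fin K)) : ℝ := fmin K x T - fmax K x (B \ T)

/-- i(P): the largest `i` such that the first `i` parts of the ordered partition `L`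
have total size at most `m`. -/
def iIdx (L : List (Finset (Fin K))) : ℕ :=
  Nat.findGreatest (fun i => ((L.take i).map Finset.card).sum ≤ m) L.length

/-- A(P): the union of the first i(P) parts (the coordinates already identified as
belonging to the top m). -/
def Aset (L : List (Finset (Fin K))) : Finset (Fin K) :=
  (L.take (iIdx K m L)).foldr (· ∪ ·) ∅

/-- B(P): the currently undecided part; `∅` if `|A(P)| = m`, else the part S_{i(P)+1}. -/
def Bset (L : List (Finset (Fin K))) : Finset (Fin K) :=
  if (Aset K m L).card = m then ∅ else L.getD (iIdx K m L) ∅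

/-- A vertex of the tree T_{K,m} is encoded by the sequence of splits leading to it from
the root (head = most recently chosen top part): this recovers its underlying ordered
partition, by splitting at each step the then-current undecided set B into `T > B \ T`. -/
def partitionOf : List (Finset (Fin K)) → List (Finset (Fin K))
  | [] => [Finset.univ]
  | T :: l =>
    let L := partitionOf l
    let i := iIdx K m L
    L.take i ++ [T, L.getD i ∅ \ T] ++ L.drop (i + 1)

/-- A(P) for a vertex of T_{K,m}. -/
def Anode (l : List (Finset (Fin K))) : Finset (Fin K) := Aset K m (partitionOf K m l)

/-- B(P) for a vertex of T_{K,m}. -/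
def Bnode (l : List (Finset (Fin K))) : Finset (Fin K) := Bset K m (partitionOf K m l)

/-- Membership in T_{K,m}: each successive split must cut the current undecided set B
into a nonempty strict subset (the new top part) and the rest. The root is `[]`, a
vertex is a leaf iff its `Bnode` is empty, `T :: l` is a child of `l`, and the ancestors
of a vertex are exactly its list suffixes. -/
def Valid : List (Finset (Fin K)) → Prop
  | [] => True
  | T :: l => Valid l ∧ T.Nonempty ∧ T ⊂ Bnode K m l

/-- The elements of `B` sorted by `x` in (weakly) decreasing order,
ties broken by coordinate index (stability of merge sort). -/
def sortedB (x : Fin K → ℝ) (B : Finset (Fin K)) : List (Fin K) :=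
  (B.sort (· ≤ ·)).mergeSort (fun a b => decide (x b ≤ x a))

/-- The set `{a_1, …, a_j}` of the `j` largest coordinates of `B` under `x`. -/
def topSet (x : Fin K → ℝ) (B : Finset (Fin K)) (j : ℕ) : Finset (Fin K) :=
  ((sortedB K x B).take j).toFinset

/-- Line 7 of Algorithm 1: the algorithm, currently at the vertex `l`, returns `l`
because for some ancestor `q ⪯ l` and some child `q_j` of `q` (splitting B(q) at the
`j`-th position of the `x`-sorted order), the quantity `gap_{q_j}(x) - c(q)·range_q(x)`
is within `(d(l,q)+1)·6ε` of zero. -/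
def stopAt (c : List (Finset (Fin K)) → ℝ) (ε : ℝ) (x : Fin K → ℝ)
    (l : List (Finset (Fin K))) : Prop :=
  ∃ q ∈ l.tails, ∃ j, 1 ≤ j ∧ j < (Bnode K m q).card ∧
    |gapX K x (topSet K x (Bnode K m q) j) (Bnode K m q) - c q * rangeX K x (Bnode K m q)|
      ≤ ((l.length - q.length + 1 : ℕ) : ℝ) * (6 * ε)

/-- Lines 10-15 of Algorithm 1: move from `l` to the child `l_j` for the smallest
`j ∈ {1, …, ℓ-1}` with `gap_{l_j}(x) ≥ c(l)·range_l(x)`. -/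
def descend (c : List (Finset (Fin K)) → ℝ) (x : Fin K → ℝ)
    (l : List (Finset (Fin K))) : List (Finset (Fin K)) :=
  if h : ∃ j, 1 ≤ j ∧ j < (Bnode K m l).card ∧
      c l * rangeX K x (Bnode K m l)
        ≤ gapX K x (topSet K x (Bnode K m l) j) (Bnode K m l)
  then topSet K x (Bnode K m l) (Nat.find h) :: l
  else l

/-- The while loop of Algorithm 1, with fuel (the tree T_{K,m} has depth < K, so fuel K
suffices for the loop to terminate as in the paper). -/
def run (c : List (Finset (Fin K)) → ℝ) (ε : ℝ) (x : Fin K → ℝ) :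
    ℕ → List (Finset (Fin K)) → List (Finset (Fin K))
  | 0, l => l
  | n + 1, l =>
    if Bnode K m l = ∅ then l
    else if stopAt K m c ε x l then l
    else run c ε x n (descend K m c x l)

/-- The vertex P_{c,ε}(x) ∈ T_{K,m} output by Algorithm 1 on input x. The vertices
visited by the while loop are exactly the suffixes of the output. -/
def Pmap (c : List (Finset (Fin K)) → ℝ) (ε : ℝ) (x : Fin K → ℝ) :
    List (Finset (Fin K)) :=
  run K m c ε x K []

section Analysis

variable {K m}

-- ===== sorted list facts =====

lemma sortedB_perm (x : Fin K → ℝ) (B : Finset (Fin K)) :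
    (sortedB K x B).Perm (B.sort (· ≤ ·)) := List.mergeSort_perm _ _

lemma mem_sortedB {x : Fin K → ℝ} {B : Finset (Fin K)} {a : Fin K} :
    a ∈ sortedB K x B ↔ a ∈ B := by
  rw [(sortedB_perm x B).mem_iff, Finset.mem_sort]

lemma sortedB_nodup (x : Fin K → ℝ) (B : Finset (Fin K)) : (sortedB K x B).Nodup :=
  (sortedB_perm x B).nodup_iff.mpr (Finset.sort_nodup B _)

lemma sortedB_length (x : Fin K → ℝ) (B : Finset (Fin K)) :
    (sortedB K x B).length = B.card := by
  rw [(sortedB_perm x B).length_eq, Finset.length_sort]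

lemma sortedB_sorted (x : Fin K → ℝ) (B : Finset (Fin K)) :
    (sortedB K x B).Pairwise (fun a b => x b ≤ x a) := by
  have h := List.pairwise_mergeSort (le := fun a b : Fin K => decide (x b ≤ x a))
    (fun a b c hab hbc => by
      simp only [decide_eq_true_eq] at *; exact le_trans hbc hab)
    (fun a b => by simpa using le_total (x b) (x a)) (B.sort (· ≤ ·))
  exact h.imp (fun hab => by simpa using hab)

/-- j-th largest value of x over B. -/
def nv (x : Fin K → ℝ) (B : Finset (Fin K)) (i : ℕ) : ℝ :=
  ((sortedB K x B).map x).getD i 0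

lemma nv_eq {x : Fin K → ℝ} {B : Finset (Fin K)} {i : ℕ}
    (h : i < (sortedB K x B).length) :
    nv x B i = x ((sortedB K x B)[i]'h) := by
  unfold nv
  rw [List.getD_eq_getElem _ _ (by simpa using h), List.getElem_map]

lemma nv_le_of_mem_take {x : Fin K → ℝ} {B : Finset (Fin K)} {i : ℕ}
    (h : i < B.card) : ∀ a ∈ (sortedB K x B).take (i + 1), nv x B i ≤ x a := by
  intro a ha
  have hl : i < (sortedB K x B).length := by rwa [sortedB_length]
  rw [nv_eq hl]
  obtain ⟨k, hk, hka⟩ := List.mem_iff_getElem.mp ha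
  have hk' : k < (sortedB K x B).length := lt_of_lt_of_le hk (by simp [List.length_take])
  have hki : k ≤ i := by
    have := hk; rw [List.length_take] at this; omega
  have : ((sortedB K x B).take (i+1))[k] = (sortedB K x B)[k]'hk' := List.getElem_take
  rw [this] at hka
  subst hka
  rcases eq_or_lt_of_le hki with rfl | hlt
  · exact le_refl _
  · exact (List.pairwise_iff_getElem.mp (sortedB_sorted x B)) k i hk' hl hlt

lemma mem_drop_le_nv {x : Fin K → ℝ} {B : Finset (Fin K)} {i : ℕ}
    (h : i < B.card) : ∀ a ∈ (sortedB K x B).drop i, x a ≤ nv x B i := by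
  intro a ha
  have hl : i < (sortedB K x B).length := by rwa [sortedB_length]
  rw [nv_eq hl]
  obtain ⟨k, hk, hka⟩ := List.mem_iff_getElem.mp ha
  have hik : i + k < (sortedB K x B).length := by
    have := hk; rw [List.length_drop] at this; omega
  have : ((sortedB K x B).drop i)[k] = (sortedB K x B)[i + k]'hik := List.getElem_drop
  rw [this] at hka
  subst hka
  rcases Nat.eq_zero_or_pos k with rfl | hpos
  · simp
  · exact (List.pairwise_iff_getElem.mp (sortedB_sorted x B)) i (i+k) hl hik (by omega)

-- ===== fmax / fmin facts =====

lemma le_fmax {x : Fin K → ℝ} {B : Finset (Fin K)} {a : Fin K} (ha : a ∈ B) :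
    x a ≤ fmax K x B :=
  le_csSup (B.finite_toSet.image x).bddAbove ⟨a, ha, rfl⟩

lemma fmin_le {x : Fin K → ℝ} {B : Finset (Fin K)} {a : Fin K} (ha : a ∈ B) :
    fmin K x B ≤ x a :=
  csInf_le (B.finite_toSet.image x).bddBelow ⟨a, ha, rfl⟩

lemma fmax_le {x : Fin K → ℝ} {B : Finset (Fin K)} {r : ℝ} (hB : B.Nonempty)
    (h : ∀ a ∈ B, x a ≤ r) : fmax K x B ≤ r :=
  csSup_le (hB.to_set.image x) (by rintro _ ⟨a, ha, rfl⟩; exact h a ha)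

lemma le_fmin {x : Fin K → ℝ} {B : Finset (Fin K)} {r : ℝ} (hB : B.Nonempty)
    (h : ∀ a ∈ B, r ≤ x a) : r ≤ fmin K x B :=
  le_csInf (hB.to_set.image x) (by rintro _ ⟨a, ha, rfl⟩; exact h a ha)

lemma fmax_mem {x : Fin K → ℝ} {B : Finset (Fin K)} (hB : B.Nonempty) :
    ∃ a ∈ B, fmax K x B = x a := by
  have := Set.Nonempty.csSup_mem (hB.to_set.image x) (B.finite_toSet.image x)
  obtain ⟨a, ha, hxa⟩ := this
  exact ⟨a, ha, hxa.symm⟩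

lemma fmin_mem {x : Fin K → ℝ} {B : Finset (Fin K)} (hB : B.Nonempty) :
    ∃ a ∈ B, fmin K x B = x a := by
  have := Set.Nonempty.csInf_mem (hB.to_set.image x) (B.finite_toSet.image x)
  obtain ⟨a, ha, hxa⟩ := this
  exact ⟨a, ha, hxa.symm⟩

lemma rangeX_nonneg {x : Fin K → ℝ} {B : Finset (Fin K)} (hB : B.Nonempty) :
    0 ≤ rangeX K x B := by
  obtain ⟨a, ha⟩ := hB
  have := fmin_le (x := x) ha
  have := le_fmax (x := x) ha
  unfold rangeX; linarith

lemma range_close {x y : Fin K → ℝ} {B : Finset (Fin K)} {ε : ℝ}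
    (hxy : ∀ i, |x i - y i| ≤ ε) (hB : B.Nonempty) :
    |rangeX K x B - rangeX K y B| ≤ 2 * ε := by
  obtain ⟨a, ha, hax⟩ := fmax_mem (x := x) hB
  obtain ⟨b, hb, hbx⟩ := fmax_mem (x := y) hB
  obtain ⟨a', ha', hax'⟩ := fmin_mem (x := x) hB
  obtain ⟨b', hb', hbx'⟩ := fmin_mem (x := y) hB
  have h1 : fmax K x B ≤ fmax K y B + ε := by
    have := le_fmax (x := y) ha
    have := (abs_le.mp (hxy a)).2
    linarith
  have h2 : fmax K y B ≤ fmax K x B + ε := by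
    have := le_fmax (x := x) hb
    have := (abs_le.mp (hxy b)).1
    linarith
  have h3 : fmin K x B ≤ fmin K y B + ε := by
    have := fmin_le (x := x) hb'
    have := (abs_le.mp (hxy b')).2
    linarith
  have h4 : fmin K y B ≤ fmin K x B + ε := by
    have := fmin_le (x := y) ha'
    have := (abs_le.mp (hxy a')).1
    linarith
  unfold rangeX
  rw [abs_le]; constructor <;> linarith

-- ===== topSet facts =====

lemma topSet_subset {x : Fin K → ℝ} {B : Finset (Fin K)} {j : ℕ} :
    topSet K x B j ⊆ B := by
  intro a ha
  rw [topSet, List.mem_toFinset] at ha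
  exact mem_sortedB.mp ((List.take_sublist _ _).mem ha)

lemma topSet_card {x : Fin K → ℝ} {B : Finset (Fin K)} {j : ℕ} (hj : j ≤ B.card) :
    (topSet K x B j).card = j := by
  rw [topSet, List.toFinset_card_of_nodup ((sortedB_nodup x B).sublist (List.take_sublist _ _)),
    List.length_take, sortedB_length]
  omega

lemma topSet_nonempty {x : Fin K → ℝ} {B : Finset (Fin K)} {j : ℕ}
    (h1 : 1 ≤ j) (hj : j ≤ B.card) : (topSet K x B j).Nonempty :=
  Finset.card_pos.mp (by rw [topSet_card hj]; omega)

lemma topSet_ssubset {x : Fin K → ℝ} {B : Finset (Fin K)} {j : ℕ}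
    (h2 : j < B.card) : topSet K x B j ⊂ B := by
  refine lt_of_le_of_ne topSet_subset (fun h => ?_)
  have := topSet_card (x := x) (B := B) (j := j) h2.le
  rw [h] at this
  omega

lemma mem_topSet {x : Fin K → ℝ} {B : Finset (Fin K)} {j : ℕ} {a : Fin K} :
    a ∈ topSet K x B j ↔ a ∈ (sortedB K x B).take j := List.mem_toFinset

lemma mem_sdiff_topSet {x : Fin K → ℝ} {B : Finset (Fin K)} {j : ℕ} {a : Fin K} :
    a ∈ B \ topSet K x B j ↔ a ∈ (sortedB K x B).drop j := by
  have hnd := sortedB_nodup x B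
  have hsplit := List.take_append_drop j (sortedB K x B)
  have hmem : a ∈ sortedB K x B ↔
      a ∈ (sortedB K x B).take j ∨ a ∈ (sortedB K x B).drop j := by
    conv_lhs => rw [← hsplit]
    exact List.mem_append
  have hdisj : a ∈ (sortedB K x B).drop j → a ∉ (sortedB K x B).take j := by
    intro hd ht
    have : ((sortedB K x B).take j ++ (sortedB K x B).drop j).Nodup := by rw [hsplit]; exact hnd
    exact (List.disjoint_of_nodup_append this) ht hd
  rw [Finset.mem_sdiff, mem_topSet, ← mem_sortedB (x := x)]
  constructor
  · rintro ⟨hB, hnt⟩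
    rcases hmem.mp hB with h | h
    · exact absurd h hnt
    · exact h
  · intro hd
    exact ⟨hmem.mpr (Or.inr hd), hdisj hd⟩

-- ===== gap formula =====

lemma gapX_eq {x : Fin K → ℝ} {B : Finset (Fin K)} {j : ℕ}
    (h1 : 1 ≤ j) (h2 : j < B.card) :
    gapX K x (topSet K x B j) B = nv x B (j - 1) - nv x B j := by
  have hl : (sortedB K x B).length = B.card := sortedB_length x B
  have hjl : j < (sortedB K x B).length := by omega
  have hj1l : j - 1 < (sortedB K x B).length := by omega
  have e1 : fmin K x (topSet K x B j) = nv x B (j - 1) := by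
    apply le_antisymm
    · rw [nv_eq hj1l]
      apply fmin_le
      rw [mem_topSet]
      have hjt : j - 1 < ((sortedB K x B).take j).length := by
        rw [List.length_take]; omega
      have hg := List.getElem_take (xs := sortedB K x B) (j := j) (i := j - 1) (h := hjt)
      have hm := List.getElem_mem hjt
      rw [hg] at hm
      exact hm
    · apply le_fmin (topSet_nonempty h1 h2.le)
      intro a ha
      refine nv_le_of_mem_take (by omega) a ?_
      rw [show j - 1 + 1 = j from by omega]
      exact mem_topSet.mp ha
  have e2 : fmax K x (B \ topSet K x B j) = nv x B j := by
    have hjd : 0 < ((sortedB K x B).drop j).length := by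
      rw [List.length_drop]; omega
    have hne : ((sortedB K x B)[j]'hjl) ∈ B \ topSet K x B j := by
      rw [mem_sdiff_topSet]
      have hg := List.getElem_drop (xs := sortedB K x B) (i := j) (j := 0) (h := hjd)
      have hm := List.getElem_mem hjd
      rw [hg] at hm
      simpa using hm
    apply le_antisymm
    · refine fmax_le ⟨_, hne⟩ (fun a ha => ?_)
      exact mem_drop_le_nv h2 a (mem_sdiff_topSet.mp ha)
    · rw [nv_eq hjl]
      exact le_fmax hne
  rw [gapX, e1, e2]

-- ===== order statistic stability =====

lemma nv_close {x y : Fin K → ℝ} {B : Finset (Fin K)} {ε : ℝ} {i : ℕ}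
    (hxy : ∀ k, |x k - y k| ≤ ε) (h : i < B.card) :
    nv x B i ≤ nv y B i + ε := by
  classical
  set Lx := sortedB K x B with hLx
  set Ly := sortedB K y B with hLy
  have hlx : Lx.length = B.card := sortedB_length x B
  have hly : Ly.length = B.card := sortedB_length y B
  set S : Finset (Fin K) := (Lx.take (i + 1)).toFinset with hS
  set T : Finset (Fin K) := (Ly.take i).toFinset with hT
  have hcardS : S.card = i + 1 := by
    rw [hS, List.toFinset_card_of_nodup ((sortedB_nodup x B).sublist (List.take_sublist _ _)),
      List.length_take, sortedB_length]
    omega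
  have hcardT : T.card ≤ i := by
    refine le_trans (List.toFinset_card_le _) ?_
    rw [List.length_take]
    exact Nat.min_le_left _ _
  obtain ⟨a, haS, haT⟩ : ∃ a ∈ S, a ∉ T := by
    by_contra hcon
    push_neg at hcon
    have := Finset.card_le_card hcon
    omega
  have h1 : nv x B i ≤ x a := nv_le_of_mem_take h a (List.mem_toFinset.mp haS)
  have haB : a ∈ B := mem_sortedB.mp ((List.take_sublist _ _).mem (List.mem_toFinset.mp haS))
  have haLy : a ∈ Ly := mem_sortedB.mpr haB
  have haDrop : a ∈ Ly.drop i := by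
    have hsplit := List.take_append_drop i Ly
    have : a ∈ Ly.take i ++ Ly.drop i := by rw [hsplit]; exact haLy
    rcases List.mem_append.mp this with hmem | hmem
    · exact absurd (List.mem_toFinset.mpr hmem) haT
    · exact hmem
  have h2 : y a ≤ nv y B i := mem_drop_le_nv h a haDrop
  have h3 := (abs_le.mp (hxy a)).2
  linarith

lemma gap_close {x y : Fin K → ℝ} {B : Finset (Fin K)} {ε : ℝ} {j : ℕ}
    (hxy : ∀ k, |x k - y k| ≤ ε) (h1 : 1 ≤ j) (h2 : j < B.card) :
    |gapX K x (topSet K x B j) B - gapX K y (topSet K y B j) B| ≤ 2 * ε := by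
  have hyx : ∀ k, |y k - x k| ≤ ε := fun k => by rw [abs_sub_comm]; exact hxy k
  rw [gapX_eq h1 h2, gapX_eq h1 h2]
  have a1 := nv_close (x := x) (y := y) hxy (show j - 1 < B.card by omega)
  have a2 := nv_close (x := y) (y := x) hyx (show j - 1 < B.card by omega)
  have a3 := nv_close (x := x) (y := y) hxy h2
  have a4 := nv_close (x := y) (y := x) hyx h2
  rw [abs_le]; constructor <;> linarith

lemma topSet_eq_of_gap {x y : Fin K → ℝ} {B : Finset (Fin K)} {ε : ℝ} {j : ℕ}
    (hxy : ∀ k, |x k - y k| ≤ ε) (h1 : 1 ≤ j) (h2 : j < B.card)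
    (hgap : 2 * ε < nv x B (j - 1) - nv x B j) :
    topSet K x B j = topSet K y B j := by
  have hyx : ∀ k, |y k - x k| ≤ ε := fun k => by rw [abs_sub_comm]; exact hxy k
  have hsub : topSet K x B j ⊆ topSet K y B j := by
    intro a ha
    by_contra hna
    have haB : a ∈ B := topSet_subset ha
    have hsd : a ∈ B \ topSet K y B j := Finset.mem_sdiff.mpr ⟨haB, hna⟩
    have hdrop : a ∈ (sortedB K y B).drop j := mem_sdiff_topSet.mp hsd
    have h3 : y a ≤ nv y B j := mem_drop_le_nv h2 a hdrop
    have h4 : nv y B j ≤ nv x B j + ε := nv_close hyx h2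
    have h5 : nv x B (j - 1) ≤ x a := by
      refine nv_le_of_mem_take (by omega) a ?_
      rw [show j - 1 + 1 = j from by omega]
      exact mem_topSet.mp ha
    have h6 := (abs_le.mp (hxy a)).2
    linarith
  refine Finset.eq_of_subset_of_card_le hsub ?_
  rw [topSet_card h2.le, topSet_card h2.le]


end Analysis

section NoCollision

variable {K m}
variable {c : List (Finset (Fin K)) → ℝ} {ε : ℝ} {x y : Fin K → ℝ}
  {l q : List (Finset (Fin K))}

lemma run_succ {n : ℕ} : run K m c ε x (n + 1) l =
    if Bnode K m l = ∅ then l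
    else if stopAt K m c ε x l then l
    else run K m c ε x n (descend K m c x l) := rfl

lemma valid_suffix (h : q <:+ l) (hl : Valid K m l) : Valid K m q := by
  induction l with
  | nil => rw [List.suffix_nil.mp h]; exact trivial
  | cons T l ih =>
    rcases List.suffix_cons_iff.mp h with rfl | h'
    · exact hl
    · exact ih h' hl.1

lemma run_stop (h : stopAt K m c ε x l) : ∀ n, run K m c ε x n l = l
  | 0 => rfl
  | n + 1 => by
    unfold run
    by_cases hB : Bnode K m l = ∅
    · rw [if_pos hB]
    · rw [if_neg hB, if_pos h]

lemma run_fix (h : descend K m c x l = l) : ∀ n, run K m c ε x n l = l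
  | 0 => rfl
  | n + 1 => by
    unfold run
    by_cases hB : Bnode K m l = ∅
    · rw [if_pos hB]
    · by_cases hs : stopAt K m c ε x l
      · rw [if_neg hB, if_pos hs]
      · rw [if_neg hB, if_neg hs, h]; exact run_fix h n

lemma not_stop_bound (hs : ¬ stopAt K m c ε x l) {j : ℕ}
    (h1 : 1 ≤ j) (h2 : j < (Bnode K m l).card) :
    6 * ε < |gapX K x (topSet K x (Bnode K m l) j) (Bnode K m l)
      - c l * rangeX K x (Bnode K m l)| := by
  by_contra hcon
  push_neg at hcon
  exact hs ⟨l, (List.mem_tails _ _).mpr List.suffix_rfl, j, h1, h2, by simpa using hcon⟩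

lemma crange_close {r : ℝ} {B : Finset (Fin K)} (hc0 : 0 ≤ r) (hc1 : r ≤ 1)
    (hxy : ∀ k, |x k - y k| ≤ ε) (hBne : B.Nonempty) :
    |r * rangeX K x B - r * rangeX K y B| ≤ 2 * ε := by
  rw [← mul_sub, abs_mul, abs_of_nonneg hc0]
  calc r * |rangeX K x B - rangeX K y B|
      ≤ 1 * (2 * ε) := mul_le_mul hc1 (range_close hxy hBne) (abs_nonneg _) zero_le_one
    _ = 2 * ε := one_mul _

lemma stop_transfer (hε : 0 ≤ ε) (hxy : ∀ k, |x k - y k| ≤ ε)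
    (hcq : ∀ q, q <:+ l → 0 ≤ c q ∧ c q ≤ 1)
    (h : stopAt K m c ε x l) (T : Finset (Fin K)) : stopAt K m c ε y (T :: l) := by
  obtain ⟨q, hq, j, h1, h2, hb⟩ := h
  rw [List.mem_tails] at hq
  refine ⟨q, (List.mem_tails _ _).mpr (hq.trans (List.suffix_cons T l)), j, h1, h2, ?_⟩
  have hBne : (Bnode K m q).Nonempty := Finset.card_pos.mp (by omega)
  have hg := gap_close (B := Bnode K m q) hxy h1 h2
  have h3 := crange_close (x := x) (y := y) (hcq q hq).1 (hcq q hq).2 hxy hBne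
  have hlen : ((T :: l).length - q.length + 1 : ℕ) = (l.length - q.length + 1) + 1 := by
    have := hq.length_le
    simp only [List.length_cons]
    omega
  rw [hlen, Nat.cast_add, Nat.cast_one]
  set gX := gapX K x (topSet K x (Bnode K m q) j) (Bnode K m q) with hgX
  set gY := gapX K y (topSet K y (Bnode K m q) j) (Bnode K m q) with hgY
  set rX := c q * rangeX K x (Bnode K m q) with hrX
  set rY := c q * rangeX K y (Bnode K m q) with hrY
  have key : |gY - rY| ≤ |gX - rX| + (2 * ε) + (2 * ε) := by
    have hdec : gY - rY = (gX - rX) + (gY - gX) + (rX - rY) := by ring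
    rw [hdec]
    refine (abs_add_le _ _).trans (add_le_add ((abs_add_le _ _).trans (add_le_add le_rfl ?_)) h3)
    rw [abs_sub_comm]; exact hg
  have hexp : ((((l.length - q.length + 1 : ℕ)) : ℝ) + 1) * (6 * ε)
      = ((l.length - q.length + 1 : ℕ) : ℝ) * (6 * ε) + 6 * ε := by ring
  rw [hexp]
  linarith [key, hb]

lemma gap_push (hε : 0 < ε) (hxy : ∀ k, |x k - y k| ≤ ε)
    (hc0 : 0 ≤ c l) (hc1 : c l ≤ 1) (hsx : ¬ stopAt K m c ε x l)
    {j : ℕ} (h1 : 1 ≤ j) (h2 : j < (Bnode K m l).card)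
    (hge : c l * rangeX K x (Bnode K m l)
      ≤ gapX K x (topSet K x (Bnode K m l) j) (Bnode K m l)) :
    c l * rangeX K x (Bnode K m l) + 6 * ε
      ≤ gapX K x (topSet K x (Bnode K m l) j) (Bnode K m l) ∧
    c l * rangeX K y (Bnode K m l) + 2 * ε
      ≤ gapX K y (topSet K y (Bnode K m l) j) (Bnode K m l) := by
  have hBne : (Bnode K m l).Nonempty := Finset.card_pos.mp (by omega)
  have hbig := not_stop_bound hsx h1 h2
  have hg := gap_close (B := Bnode K m l) hxy h1 h2
  have h3 := crange_close (x := x) (y := y) hc0 hc1 hxy hBne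
  rw [abs_of_nonneg (by linarith)] at hbig
  have hgd := (abs_le.mp hg).2
  have h3d := (abs_le.mp h3).1
  exact ⟨by linarith, by linarith⟩

lemma valid_descend (hl : Valid K m l) : Valid K m (descend K m c x l) := by
  unfold descend
  split_ifs with h
  · obtain ⟨h1, h2, _⟩ := Nat.find_spec h
    exact ⟨hl, topSet_nonempty h1 h2.le, topSet_ssubset h2⟩
  · exact hl

lemma descend_agree (hε : 0 < ε) (hxy : ∀ k, |x k - y k| ≤ ε)
    (hc0 : 0 ≤ c l) (hc1 : c l ≤ 1)
    (hsx : ¬ stopAt K m c ε x l) (hsy : ¬ stopAt K m c ε y l) :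
    descend K m c x l = descend K m c y l := by
  have hyx : ∀ k, |y k - x k| ≤ ε := fun k => by rw [abs_sub_comm]; exact hxy k
  by_cases h : ∃ j, 1 ≤ j ∧ j < (Bnode K m l).card ∧
      c l * rangeX K x (Bnode K m l)
        ≤ gapX K x (topSet K x (Bnode K m l) j) (Bnode K m l)
  · have h' : ∃ j, 1 ≤ j ∧ j < (Bnode K m l).card ∧
        c l * rangeX K y (Bnode K m l)
          ≤ gapX K y (topSet K y (Bnode K m l) j) (Bnode K m l) := by
      obtain ⟨j, hj1, hj2, hj3⟩ := h
      refine ⟨j, hj1, hj2, ?_⟩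
      have := (gap_push hε hxy hc0 hc1 hsx hj1 hj2 hj3).2
      linarith
    have hfind : Nat.find h = Nat.find h' := by
      apply le_antisymm
      · obtain ⟨h1', h2', h3'⟩ := Nat.find_spec h'
        refine Nat.find_le ⟨h1', h2', ?_⟩
        have := (gap_push hε hyx hc0 hc1 hsy h1' h2' h3').2
        linarith
      · obtain ⟨h1', h2', h3'⟩ := Nat.find_spec h
        refine Nat.find_le ⟨h1', h2', ?_⟩
        have := (gap_push hε hxy hc0 hc1 hsx h1' h2' h3').2
        linarith
    have htop : topSet K x (Bnode K m l) (Nat.find h)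
        = topSet K y (Bnode K m l) (Nat.find h) := by
      obtain ⟨h1', h2', h3'⟩ := Nat.find_spec h
      have hpush := (gap_push hε hxy hc0 hc1 hsx h1' h2' h3').1
      have hBne : (Bnode K m l).Nonempty := Finset.card_pos.mp (by omega)
      have hcr : 0 ≤ c l * rangeX K x (Bnode K m l) :=
        mul_nonneg hc0 (rangeX_nonneg hBne)
      apply topSet_eq_of_gap hxy h1' h2'
      rw [← gapX_eq h1' h2']
      linarith
    unfold descend
    rw [dif_pos h, dif_pos h', ← hfind, htop]
  · have h' : ¬ ∃ j, 1 ≤ j ∧ j < (Bnode K m l).card ∧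
        c l * rangeX K y (Bnode K m l)
          ≤ gapX K y (topSet K y (Bnode K m l) j) (Bnode K m l) := by
      rintro ⟨j, hj1, hj2, hj3⟩
      refine h ⟨j, hj1, hj2, ?_⟩
      have := (gap_push hε hyx hc0 hc1 hsy hj1 hj2 hj3).2
      linarith
    unfold descend
    rw [dif_neg h, dif_neg h']

lemma lagged (hε : 0 < ε) (hxy : ∀ k, |x k - y k| ≤ ε)
    (hcq : ∀ q, q <:+ l → 0 ≤ c q ∧ c q ≤ 1)
    (hl : Valid K m l) (hsx : stopAt K m c ε x l) (hsy : ¬ stopAt K m c ε y l) :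
    ∀ n, Valid K m (run K m c ε y n l) ∧
      (run K m c ε y n l = l ∨ ∃ T, run K m c ε y n l = T :: l)
  | 0 => ⟨hl, Or.inl rfl⟩
  | n + 1 => by
    unfold run
    by_cases hB : Bnode K m l = ∅
    · rw [if_pos hB]; exact ⟨hl, Or.inl rfl⟩
    rw [if_neg hB, if_neg hsy]
    by_cases hy : ∃ j, 1 ≤ j ∧ j < (Bnode K m l).card ∧
        c l * rangeX K y (Bnode K m l)
          ≤ gapX K y (topSet K y (Bnode K m l) j) (Bnode K m l)
    · have hd : descend K m c y l = topSet K y (Bnode K m l) (Nat.find hy) :: l :=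
        dif_pos hy
      obtain ⟨h1, h2, _⟩ := Nat.find_spec hy
      have hstop : stopAt K m c ε y (topSet K y (Bnode K m l) (Nat.find hy) :: l) :=
        stop_transfer hε.le hxy hcq hsx _
      rw [hd, run_stop hstop n]
      exact ⟨⟨hl, topSet_nonempty h1 h2.le, topSet_ssubset h2⟩, Or.inr ⟨_, rfl⟩⟩
    · have hd : descend K m c y l = l := dif_neg hy
      rw [hd, run_fix hd n]
      exact ⟨hl, Or.inl rfl⟩

lemma main_run (hε : 0 < ε) (hxy : ∀ k, |x k - y k| ≤ ε)
    (hc : ∀ q, Valid K m q → c q ∈ Set.Icc (0 : ℝ) (1 / K)) (hK1 : (1 : ℝ) / K ≤ 1) :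
    ∀ n l, Valid K m l →
      Valid K m (run K m c ε x n l) ∧ Valid K m (run K m c ε y n l) ∧
      (run K m c ε x n l = run K m c ε y n l ∨
        (∃ T, run K m c ε x n l = T :: run K m c ε y n l) ∨
        (∃ T, run K m c ε y n l = T :: run K m c ε x n l)) := by
  intro n
  induction n with
  | zero => exact fun l hl => ⟨hl, hl, Or.inl rfl⟩
  | succ n ih =>
    intro l hl
    have hyx : ∀ k, |y k - x k| ≤ ε := fun k => by rw [abs_sub_comm]; exact hxy k
    have hcq : ∀ q, q <:+ l → 0 ≤ c q ∧ c q ≤ 1 := fun q hq =>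
      ⟨(hc q (valid_suffix hq hl)).1, (hc q (valid_suffix hq hl)).2.trans hK1⟩
    by_cases hB : Bnode K m l = ∅
    · have ex : run K m c ε x (n + 1) l = l := by unfold run; rw [if_pos hB]
      have ey : run K m c ε y (n + 1) l = l := by unfold run; rw [if_pos hB]
      rw [ex, ey]; exact ⟨hl, hl, Or.inl rfl⟩
    by_cases hsx : stopAt K m c ε x l <;> by_cases hsy : stopAt K m c ε y l
    · rw [run_stop hsx, run_stop hsy]; exact ⟨hl, hl, Or.inl rfl⟩
    · rw [run_stop hsx]
      obtain ⟨hv, hrel⟩ := lagged hε hxy hcq hl hsx hsy (n + 1)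
      refine ⟨hl, hv, ?_⟩
      rcases hrel with h | ⟨T, h⟩
      · exact Or.inl h.symm
      · exact Or.inr (Or.inr ⟨T, h⟩)
    · rw [run_stop hsy]
      obtain ⟨hv, hrel⟩ := lagged hε hyx hcq hl hsy hsx (n + 1)
      refine ⟨hv, hl, ?_⟩
      rcases hrel with h | ⟨T, h⟩
      · exact Or.inl h
      · exact Or.inr (Or.inl ⟨T, h⟩)
    · have hde := descend_agree hε hxy (hcq l List.suffix_rfl).1
        (hcq l List.suffix_rfl).2 hsx hsy
      have ex : run K m c ε x (n + 1) l = run K m c ε x n (descend K m c x l) := by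
        rw [run_succ, if_neg hB, if_neg hsx]
      have ey : run K m c ε y (n + 1) l = run K m c ε y n (descend K m c y l) := by
        rw [run_succ, if_neg hB, if_neg hsy]
      rw [ex, ey, ← hde]
      exact ih _ (valid_descend hl)

end NoCollision

/-- The no-collision argument of Theorem 3.2: if F is a collision-robust m-coloring of
T_{K,m} and the m players' estimates x^1, …, x^m are pairwise ε-close in ℓ∞, then the
arms f_X(P_{c,ε}(x^X)), X ∈ [m], are pairwise distinct. -/
theorem stmt13 (K m : ℕ) (hm : 1 ≤ m) (hK : m ≤ K) (ε : ℝ) (hε : 0 < ε)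
    (c : List (Finset (Fin K)) → ℝ)
    (hc : ∀ l, Valid K m l → c l ∈ Set.Icc (0 : ℝ) (1 / K))
    (F : List (Finset (Fin K)) → Fin m → Fin K)
    (hrobust : ∀ P Q : List (Finset (Fin K)), Valid K m P → Valid K m Q →
      (P = Q ∨ (∃ T, P = T :: Q) ∨ (∃ T, Q = T :: P)) →
      ∀ i j : Fin m, F P i = F Q j → i = j)
    (xs : Fin m → Fin K → ℝ)
    (hxs : ∀ X i, xs X i ∈ Set.Icc (0 : ℝ) 1)
    (hclose : ∀ X Y i, |xs X i - xs Y i| ≤ ε) :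
    ∀ X Y : Fin m, X ≠ Y →
      F (Pmap K m c ε (xs X)) X ≠ F (Pmap K m c ε (xs Y)) Y := by
  intro X Y hXY hFeq
  have hK0 : (1 : ℕ) ≤ K := le_trans hm hK
  have hKpos : (0 : ℝ) < K := by exact_mod_cast Nat.lt_of_lt_of_le Nat.zero_lt_one hK0
  have hK1 : (1 : ℝ) / K ≤ 1 := by
    rw [div_le_one hKpos]
    exact_mod_cast hK0
  obtain ⟨vx, vy, rel⟩ :=
    main_run hε (hclose X Y) hc hK1 K ([] : List (Finset (Fin K))) trivial
  exact hXY (hrobust _ _ vx vy rel X Y hFeq)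

end MPB
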